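/- Let O_f be an order of conductor f in an imaginary quadratic field K. A nonzero O_f-ideal 𝔞 satisfies 𝔞 + fO_f = O_f if and only if its norm N(𝔞) = [O_f : 𝔞] is relatively prime to f; moreover every O_f-ideal prime to f is a proper O_f-ideal. -/

import Mathlib

open NumberField

/-- In a finite commutative ring `R`, the natural number `f` is a unit iff it is
coprime to the cardinality of `R`. -/
lemma aux_isUnit_natCast_iff_coprime {R : Type*} [CommRing R] [Finite R] (f : ℕ) :
    IsUnit (f : R) ↔ (Nat.card R).Coprime f := by
  cases nonempty_fintype R
  constructor
  · intro h
    rw [Nat.coprime_comm]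
    by_contra hc
    obtain ⟨p, hp, hpd⟩ := Nat.exists_prime_and_dvd hc
    have hpf : p ∣ f := hpd.trans (Nat.gcd_dvd_left _ _)
    have hpn : p ∣ Fintype.card R := by
      simpa [Nat.card_eq_fintype_card] using hpd.trans (Nat.gcd_dvd_right f (Nat.card R))
    haveI : Fact p.Prime := ⟨hp⟩
    obtain ⟨x, hx⟩ := exists_prime_addOrderOf_dvd_card p hpn
    have h0 : (f : R) * x = 0 := by
      rw [← nsmul_eq_mul, ← addOrderOf_dvd_iff_nsmul_eq_zero, hx]
      exact hpf
    have hx0 : x = 0 := by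
      obtain ⟨u, hu⟩ := h.exists_right_inv
      calc x = ((f : R) * u) * x := by rw [hu, one_mul]
      _ = u * ((f : R) * x) := by ring
      _ = 0 := by rw [h0, mul_zero]
    rw [hx0, addOrderOf_zero] at hx
    exact hp.one_lt.ne' hx.symm
  · intro h
    set n := Nat.card R with hn
    have hg : Nat.gcd f n = 1 := Nat.coprime_comm.mp h
    have hb : (1 : ℤ) = f * Nat.gcdA f n + n * Nat.gcdB f n := by
      rw [← Int.natCast_one, ← hg]
      exact Nat.gcd_eq_gcd_ab f n
    have hn0 : ((n : ℤ) : R) = 0 := by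
      push_cast
      rw [hn, Nat.card_eq_fintype_card, Nat.cast_card_eq_zero]
    have h1 : (1 : R) = (f : R) * ((Nat.gcdA f n : ℤ) : R) := by
      have := congrArg (fun z : ℤ => (z : R)) hb
      push_cast at this hn0 ⊢
      rw [hn0, zero_mul, add_zero] at this
      exact this
    exact IsUnit.of_mul_eq_one _ h1.symm

set_option maxHeartbeats 1000000 in
set_option synthInstance.maxHeartbeats 400000 in
/-- Let `O_f = ℤ + f·O_K` be the order of conductor `f` in an imaginary quadratic
field `K`, and `𝔞` a nonzero `O_f`-ideal.  Then `𝔞 + f·O_f = O_f` iff the norm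
`N(𝔞) = [O_f : 𝔞]` is coprime to `f`; moreover every `O_f`-ideal prime to `f`
is a proper `O_f`-ideal, i.e. `{β ∈ K : β𝔞 ⊆ 𝔞} = O_f`. -/
theorem stmt_12 (K : Type*) [Field K] [NumberField K]
    (h2 : Module.finrank ℚ K = 2) (him : IsEmpty (K →+* ℝ))
    (f : ℕ) (hf : 0 < f) (Of : Subring (𝓞 K))
    (hOf : ∀ x : 𝓞 K, x ∈ Of ↔ ∃ (m : ℤ) (y : 𝓞 K), x = m + f * y)
    (a : Ideal Of) (ha : a ≠ ⊥) :
    ((a ⊔ Ideal.span {(f : Of)} = ⊤) ↔ (Nat.card (Of ⧸ a)).Coprime f) ∧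
    (a ⊔ Ideal.span {(f : Of)} = ⊤ →
      ∀ β : K,
        (∀ x : Of, x ∈ a → ∃ y : Of, y ∈ a ∧ β * ((x : 𝓞 K) : K) = ((y : 𝓞 K) : K)) ↔
        ∃ z : 𝓞 K, z ∈ Of ∧ (z : K) = β) := by
  classical
  -- `Of` is a finite free ℤ-module
  let M : Submodule ℤ (𝓞 K) := Subalgebra.toSubmodule (subalgebraOfSubring Of)
  have hmemM : ∀ x : 𝓞 K, x ∈ M ↔ x ∈ Of := fun x => Iff.rfl
  let e : Of ≃ₗ[ℤ] M :=
    (AddEquiv.mk ⟨fun x => ⟨x.1, x.2⟩, fun x => ⟨x.1, x.2⟩, fun x => rfl, fun x => rfl⟩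
      (fun x y => rfl)).toIntLinearEquiv
  haveI : Module.Finite ℤ M := Module.Finite.iff_fg.mpr (IsNoetherian.noetherian M)
  haveI : Module.Finite ℤ Of := Module.Finite.equiv e.symm
  haveI : NoZeroSMulDivisors ℤ Of := by
    refine ⟨fun {c x} h => ?_⟩
    rcases eq_or_ne c 0 with hc | hc
    · exact Or.inl hc
    · refine Or.inr ?_
      have : ((c • x : Of) : 𝓞 K) = c • (x : 𝓞 K) := rfl
      rw [h] at this
      have hx : c • (x : 𝓞 K) = 0 := this.symm
      rcases (smul_eq_zero.mp hx) with h' | h'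
      · exact absurd h' hc
      · exact Subtype.ext h'
  haveI : Module.Free ℤ Of := Module.free_of_finite_type_torsion_free'
  haveI : Fintype (Of ⧸ a) := @Fintype.ofFinite _ (Ideal.finiteQuotientOfFreeOfNeBot a ha)
  -- the key reformulation
  have hiff : (a ⊔ Ideal.span {(f : Of)} = ⊤) ↔ IsUnit ((f : Of ⧸ a)) := by
    constructor
    · intro h
      rw [Ideal.eq_top_iff_one] at h
      obtain ⟨x, hx, y, hy, hxy⟩ := Submodule.mem_sup.mp h
      obtain ⟨u, hu⟩ := Ideal.mem_span_singleton'.mp hy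
      refine IsUnit.of_mul_eq_one (Ideal.Quotient.mk a u) ?_
      have h1 : (Ideal.Quotient.mk a) (1 : Of) = Ideal.Quotient.mk a y := by
        rw [← hxy, map_add, Ideal.Quotient.eq_zero_iff_mem.mpr hx, zero_add]
      rw [← hu] at h1
      rw [map_one] at h1
      rw [← map_natCast (Ideal.Quotient.mk a) f, ← map_mul, mul_comm ((f : Of)) u]
      exact h1.symm
    · intro h
      obtain ⟨c, hc⟩ := h.exists_right_inv
      obtain ⟨u, rfl⟩ := Ideal.Quotient.mk_surjective c
      have hm : ((f : Of) * u - 1 : Of) ∈ a := by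
        rw [← Ideal.Quotient.eq_zero_iff_mem, map_sub, map_mul, map_one, map_natCast]
        rw [hc]
        ring
      rw [Ideal.eq_top_iff_one]
      refine Submodule.mem_sup.mpr ⟨-((f : Of) * u - 1), a.neg_mem hm,
        (f : Of) * u, Ideal.mem_span_singleton'.mpr ⟨u, mul_comm u _⟩, by ring⟩
  constructor
  · rw [hiff]
    exact aux_isUnit_natCast_iff_coprime f
  · intro htop β
    constructor
    · intro h
      -- β is integral over ℤ
      obtain ⟨x0, hx0a, hx0⟩ := Submodule.exists_mem_ne_zero_of_ne_bot ha
      let φ : Of →ₗ[ℤ] K :=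
        ((algebraMap (𝓞 K) K).comp (Subring.subtype Of)).toAddMonoidHom.toIntLinearMap
      let N : Submodule ℤ K := (a.restrictScalars ℤ).map φ
      have hNfg : N.FG := Submodule.FG.map _ (IsNoetherian.noetherian _)
      have hNbot : N ≠ ⊥ := by
        intro hN
        have : φ x0 ∈ N := Submodule.mem_map_of_mem hx0a
        rw [hN, Submodule.mem_bot] at this
        apply hx0
        have h1 : ((x0 : 𝓞 K) : K) = 0 := this
        have h2 : (x0 : 𝓞 K) = 0 := by exact_mod_cast h1
        exact Subtype.ext h2
      have hβint : IsIntegral ℤ β := by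
        refine isIntegral_of_smul_mem_submodule N hNbot hNfg β ?_
        rintro n hn
        obtain ⟨x, hx, rfl⟩ := Submodule.mem_map.mp hn
        obtain ⟨y, hy, hxy⟩ := h x hx
        refine Submodule.mem_map.mpr ⟨y, hy, ?_⟩
        rw [smul_eq_mul]
        exact hxy.symm
      let zK : 𝓞 K := ⟨β, hβint⟩
      -- decompose 1 using htop
      rw [Ideal.eq_top_iff_one] at htop
      obtain ⟨α, hα, y, hy, hαy⟩ := Submodule.mem_sup.mp htop
      obtain ⟨γ, hγ⟩ := Ideal.mem_span_singleton'.mp hy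
      obtain ⟨w, hw, hwβ⟩ := h α hα
      refine ⟨(w : 𝓞 K) + (f : 𝓞 K) * (zK * (γ : 𝓞 K)), ?_, ?_⟩
      · refine Of.add_mem w.2 ?_
        rw [hOf]
        exact ⟨0, zK * (γ : 𝓞 K), by push_cast; ring⟩
      · have h1 : ((1 : Of) : 𝓞 K) = (α : 𝓞 K) + (γ : 𝓞 K) * (f : 𝓞 K) := by
          rw [← hαy, ← hγ]
          push_cast
          ring
        have h1K : (1 : K) = ((α : 𝓞 K) : K) + ((γ : 𝓞 K) : K) * (f : K) := by
          have := congrArg (fun z : 𝓞 K => (z : K)) h1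
          push_cast at this ⊢
          simpa using this
        have hzK : ((zK : 𝓞 K) : K) = β := rfl
        push_cast
        linear_combination ((f : K) * (((γ : Of) : 𝓞 K) : K)) * hzK - hwβ + (-β) * h1K
    · rintro ⟨z, hz, rfl⟩ x hx
      refine ⟨⟨z, hz⟩ * x, a.mul_mem_left _ hx, ?_⟩
      push_cast
      ring
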